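/- Let T > 0, let j ≥ 1 be an integer with T 2^{j−1} ≥ 1, and let k be an integer with 0 ≤ k ≤ T 2^{j−1}. Then ∫_ℝ ψ_{jk}(x)² 𝟙_{|x| > T} dx ≤ (2 c_ψ² / 3) (T 2^{j−1})^{−3}. -/

import Mathlib

open MeasureTheory Real Set Filter

set_option maxHeartbeats 1000000

/-- For `T > 0`, `j ≥ 1` with `T 2^{j−1} ≥ 1`, and an integer `0 ≤ k ≤ T 2^{j−1}`,
`∫ ψ_{jk}(x)² 𝟙_{|x|>T} dx ≤ (2 c_ψ²/3) (T 2^{j−1})⁻³`, where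
`ψ_{jk}(x) = 2^{j/2} ψ(2^j x − k)` and `|ψ(x)| ≤ c_ψ (1+|x|)⁻²`. -/
theorem stmt_17 (T cψ : ℝ) (hT : 0 < T) (hcψ : 0 < cψ)
    (ψ : ℝ → ℝ) (hψ : ∀ x : ℝ, |ψ x| ≤ cψ / (1 + |x|) ^ 2)
    (j : ℕ) (hj : 1 ≤ j) (hTj : 1 ≤ T * 2 ^ (j - 1))
    (k : ℤ) (hk0 : 0 ≤ k) (hk : (k : ℝ) ≤ T * 2 ^ (j - 1)) :
    (∫ x in {x : ℝ | T < |x|}, ((2 : ℝ) ^ ((j : ℝ) / 2) * ψ (2 ^ j * x - (k : ℝ))) ^ 2)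
      ≤ (2 * cψ ^ 2 / 3) / (T * 2 ^ (j - 1)) ^ 3 := by
  set b : ℝ := 2 ^ j with hbdef
  set M : ℝ := T * 2 ^ (j - 1) with hMdef
  have hM1 : 1 ≤ M := hTj
  have hM0 : 0 < M := lt_of_lt_of_le one_pos hM1
  have hb0 : 0 < b := by positivity
  have hbT : b * T = 2 * M := by
    have : (2:ℝ) ^ j = 2 ^ (j - 1) * 2 := by
      rw [← pow_succ, Nat.sub_add_cancel hj]
    rw [hbdef, hMdef, this]; ring
  have hk0' : (0:ℝ) ≤ (k:ℝ) := by exact_mod_cast hk0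
  -- the set
  have hS : {x : ℝ | T < |x|} = Ioi T ∪ Iio (-T) := by
    ext x
    simp only [mem_setOf_eq, mem_union, mem_Ioi, mem_Iio, lt_abs, lt_neg]
  rw [hS]
  have hSm : MeasurableSet (Ioi T ∪ Iio (-T) : Set ℝ) :=
    measurableSet_Ioi.union measurableSet_Iio
  -- the dominating function
  set g : ℝ → ℝ := fun x => cψ ^ 2 * b * ((1 + |b * x - k|) ^ 4)⁻¹ with hgdef
  have hsq : ((2:ℝ) ^ ((j:ℝ)/2)) ^ 2 = b := by
    rw [← Real.rpow_natCast ((2:ℝ) ^ ((j:ℝ)/2)) 2, ← Real.rpow_mul (by norm_num)]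
    norm_num [hbdef, Real.rpow_natCast]
  have hfg : ∀ x : ℝ, ((2:ℝ) ^ ((j:ℝ)/2) * ψ (b * x - k)) ^ 2 ≤ g x := by
    intro x
    have hd : (0:ℝ) < 1 + |b * x - k| := by positivity
    have h1 : ψ (b * x - k) ^ 2 ≤ (cψ / (1 + |b * x - k|) ^ 2) ^ 2 := by
      rw [← sq_abs]
      exact pow_le_pow_left₀ (abs_nonneg _) (hψ _) 2
    calc ((2:ℝ) ^ ((j:ℝ)/2) * ψ (b * x - k)) ^ 2
        = b * ψ (b * x - k) ^ 2 := by rw [mul_pow, hsq]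
      _ ≤ b * (cψ / (1 + |b * x - k|) ^ 2) ^ 2 := by
          exact mul_le_mul_of_nonneg_left h1 hb0.le
      _ = g x := by
          rw [hgdef]
          rw [div_pow, ← pow_mul]
          field_simp
  -- right piece
  set g₁ : ℝ → ℝ := fun x => cψ ^ 2 * b * ((1 + (b * x - k)) ^ 4)⁻¹ with hg1def
  have hpos₁ : ∀ x ∈ Ici T, (0:ℝ) < 1 + (b * x - k) := by
    intro x hx
    have : b * T ≤ b * x := mul_le_mul_of_nonneg_left hx hb0.le
    nlinarith [hbT]
  set F₁ : ℝ → ℝ := fun x => -(cψ ^ 2 / 3) * (((1 + (b * x - k)) ^ 3)⁻¹) with hF1def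
  have hu : ∀ x : ℝ, HasDerivAt (fun x => 1 + (b * x - (k:ℝ))) b x := by
    intro x
    simpa using (((hasDerivAt_id x).const_mul b).sub_const (k:ℝ)).const_add 1
  have hderiv₁ : ∀ x ∈ Ioi T, HasDerivAt F₁ (g₁ x) x := by
    intro x hx
    have hne : (1 + (b * x - (k:ℝ))) ≠ 0 := (hpos₁ x (mem_Ici.mpr (le_of_lt hx))).ne'
    have h3 : HasDerivAt (fun x => (1 + (b * x - (k:ℝ))) ^ 3)
        (3 * (1 + (b * x - k)) ^ 2 * b) x := by
      simpa using (hu x).fun_pow 3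
    have h4 : HasDerivAt F₁ _ x := (h3.inv (pow_ne_zero 3 hne)).const_mul (-(cψ ^ 2 / 3))
    convert h4 using 1
    rw [hg1def]
    field_simp
  have htend₁ : Tendsto F₁ atTop (nhds 0) := by
    have h0 : Tendsto (fun x : ℝ => 1 + (b * x - (k:ℝ))) atTop atTop := by
      apply tendsto_atTop_add_const_left
      apply tendsto_atTop_add_const_right
      exact Tendsto.const_mul_atTop hb0 tendsto_id
    have h1 : Tendsto (fun x : ℝ => ((1 + (b * x - (k:ℝ))) ^ 3)⁻¹) atTop (nhds 0) :=
      ((tendsto_pow_atTop (by norm_num : (3:ℕ) ≠ 0)).comp h0).inv_tendsto_atTop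
    simpa [hF1def, neg_mul] using h1.const_mul (-(cψ ^ 2 / 3))
  have hcont₁ : ContinuousWithinAt F₁ (Ici T) T := by
    apply ContinuousAt.continuousWithinAt
    have hne : (1 + (b * T - (k:ℝ))) ≠ 0 := (hpos₁ T self_mem_Ici).ne'
    exact (continuousAt_const.mul (((((continuousAt_id.const_mul b).sub
      continuousAt_const).const_add 1).pow 3).inv₀ (pow_ne_zero 3 hne)))
  have hg1nonneg : ∀ x ∈ Ioi T, 0 ≤ g₁ x := by
    intro x hx
    have := hpos₁ x (mem_Ici.mpr (le_of_lt hx))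
    positivity
  have hint₁ : IntegrableOn g₁ (Ioi T) :=
    integrableOn_Ioi_deriv_of_nonneg hcont₁ hderiv₁ hg1nonneg htend₁
  have hval₁ : ∫ x in Ioi T, g₁ x = (cψ ^ 2 / 3) * ((1 + (b * T - k)) ^ 3)⁻¹ := by
    rw [integral_Ioi_of_hasDerivAt_of_nonneg hcont₁ hderiv₁ hg1nonneg htend₁]
    rw [hF1def]; ring
  -- left piece
  set g₂ : ℝ → ℝ := fun x => cψ ^ 2 * b * ((1 + ((k:ℝ) - b * x)) ^ 4)⁻¹ with hg2def
  set h₂ : ℝ → ℝ := fun x => cψ ^ 2 * b * ((1 + ((k:ℝ) + b * x)) ^ 4)⁻¹ with hh2def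
  have hg2h2 : ∀ x : ℝ, g₂ (-x) = h₂ x := by
    intro x; simp only [hg2def, hh2def, mul_neg, sub_neg_eq_add]
  have hpos₂ : ∀ x ∈ Ici T, (0:ℝ) < 1 + ((k:ℝ) + b * x) := by
    intro x hx
    have : b * T ≤ b * x := mul_le_mul_of_nonneg_left hx hb0.le
    nlinarith [hbT]
  set F₂ : ℝ → ℝ := fun x => -(cψ ^ 2 / 3) * (((1 + ((k:ℝ) + b * x)) ^ 3)⁻¹) with hF2def
  have hu₂ : ∀ x : ℝ, HasDerivAt (fun x => 1 + ((k:ℝ) + b * x)) b x := by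
    intro x
    simpa using (((hasDerivAt_id x).const_mul b).const_add (k:ℝ)).const_add 1
  have hderiv₂ : ∀ x ∈ Ioi T, HasDerivAt F₂ (h₂ x) x := by
    intro x hx
    have hne : (1 + ((k:ℝ) + b * x)) ≠ 0 := (hpos₂ x (mem_Ici.mpr (le_of_lt hx))).ne'
    have h3 : HasDerivAt (fun x => (1 + ((k:ℝ) + b * x)) ^ 3)
        (3 * (1 + ((k:ℝ) + b * x)) ^ 2 * b) x := by
      simpa using (hu₂ x).fun_pow 3
    have h4 : HasDerivAt F₂ _ x := (h3.inv (pow_ne_zero 3 hne)).const_mul (-(cψ ^ 2 / 3))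
    convert h4 using 1
    rw [hh2def]
    field_simp
  have htend₂ : Tendsto F₂ atTop (nhds 0) := by
    have h0 : Tendsto (fun x : ℝ => 1 + ((k:ℝ) + b * x)) atTop atTop := by
      apply tendsto_atTop_add_const_left
      apply tendsto_atTop_add_const_left
      exact Tendsto.const_mul_atTop hb0 tendsto_id
    have h1 : Tendsto (fun x : ℝ => ((1 + ((k:ℝ) + b * x)) ^ 3)⁻¹) atTop (nhds 0) :=
      ((tendsto_pow_atTop (by norm_num : (3:ℕ) ≠ 0)).comp h0).inv_tendsto_atTop
    simpa [hF2def, neg_mul] using h1.const_mul (-(cψ ^ 2 / 3))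
  have hcont₂ : ContinuousWithinAt F₂ (Ici T) T := by
    apply ContinuousAt.continuousWithinAt
    have hne : (1 + ((k:ℝ) + b * T)) ≠ 0 := (hpos₂ T self_mem_Ici).ne'
    exact (continuousAt_const.mul (((((continuousAt_id.const_mul b).const_add
      (k:ℝ)).const_add 1).pow 3).inv₀ (pow_ne_zero 3 hne)))
  have hh2nonneg : ∀ x ∈ Ioi T, 0 ≤ h₂ x := by
    intro x hx
    have := hpos₂ x (mem_Ici.mpr (le_of_lt hx))
    positivity
  have hinth₂ : IntegrableOn h₂ (Ioi T) :=
    integrableOn_Ioi_deriv_of_nonneg hcont₂ hderiv₂ hh2nonneg htend₂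
  have hvalh₂ : ∫ x in Ioi T, h₂ x = (cψ ^ 2 / 3) * ((1 + ((k:ℝ) + b * T)) ^ 3)⁻¹ := by
    rw [integral_Ioi_of_hasDerivAt_of_nonneg hcont₂ hderiv₂ hh2nonneg htend₂]
    rw [hF2def]; ring
  -- transfer to Iio (-T)
  have hmemb : MeasurableEmbedding fun x : ℝ => -x :=
    (Homeomorph.neg ℝ).measurableEmbedding
  have hint₂ : IntegrableOn g₂ (Iio (-T)) := by
    rw [← Measure.map_neg_eq_self (volume : Measure ℝ), hmemb.integrableOn_map_iff]
    have : (fun x : ℝ => -x) ⁻¹' Iio (-T) = Ioi T := by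
      ext x; simp
    rw [this]
    exact hinth₂.congr_fun (fun x _ => (hg2h2 x).symm) measurableSet_Ioi
  have hval₂ : ∫ x in Iio (-T), g₂ x = (cψ ^ 2 / 3) * ((1 + ((k:ℝ) + b * T)) ^ 3)⁻¹ := by
    have e1 : ∫ x in Iio (-T), g₂ x = ∫ x in Iic (-T), g₂ x := by
      apply setIntegral_congr_set
      exact Iio_ae_eq_Iic
    rw [e1, ← integral_comp_neg_Ioi]
    rw [setIntegral_congr_fun measurableSet_Ioi (fun x _ => hg2h2 x)]
    exact hvalh₂
  -- equalities of g with the smooth versions on the pieces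
  have heq₁ : EqOn g g₁ (Ioi T) := by
    intro x hx
    have h1 : (0:ℝ) < b * x - k := by
      have : b * T ≤ b * x := mul_le_mul_of_nonneg_left (le_of_lt hx) hb0.le
      nlinarith [hbT]
    simp only [hgdef, hg1def, abs_of_pos h1]
  have heq₂ : EqOn g g₂ (Iio (-T)) := by
    intro x hx
    have h1 : b * x - k < 0 := by
      have : b * x < b * (-T) := by
        apply mul_lt_mul_of_pos_left hx hb0
      nlinarith [hbT]
    simp only [hgdef, hg2def, abs_of_neg h1, neg_sub]
  have hgint₁ : IntegrableOn g (Ioi T) :=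
    hint₁.congr_fun (fun x hx => (heq₁ hx).symm) measurableSet_Ioi
  have hgint₂ : IntegrableOn g (Iio (-T)) :=
    hint₂.congr_fun (fun x hx => (heq₂ hx).symm) measurableSet_Iio
  have hgint : IntegrableOn g (Ioi T ∪ Iio (-T)) := hgint₁.union hgint₂
  have hdisj : Disjoint (Ioi T) (Iio (-T)) := by
    rw [Set.disjoint_left]
    intro x hx hx'
    simp only [mem_Ioi] at hx
    simp only [mem_Iio] at hx'
    linarith
  -- final bound on the integral of g
  have hbound : ∫ x in Ioi T ∪ Iio (-T), g x ≤ (2 * cψ ^ 2 / 3) / M ^ 3 := by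
    rw [setIntegral_union hdisj measurableSet_Iio hgint₁ hgint₂]
    rw [setIntegral_congr_fun measurableSet_Ioi heq₁,
      setIntegral_congr_fun measurableSet_Iio heq₂]
    rw [hval₁, hval₂]
    have hA : M ≤ 1 + (b * T - k) := by linarith [hbT, hk, hM1]
    have hB : M ≤ 1 + ((k:ℝ) + b * T) := by linarith [hbT, hk0', hM1]
    have h1 : ((1 + (b * T - (k:ℝ))) ^ 3)⁻¹ ≤ (M ^ 3)⁻¹ := by
      apply inv_anti₀ (by positivity)
      exact pow_le_pow_left₀ hM0.le hA 3
    have h2 : ((1 + ((k:ℝ) + b * T)) ^ 3)⁻¹ ≤ (M ^ 3)⁻¹ := by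
      apply inv_anti₀ (by positivity)
      exact pow_le_pow_left₀ hM0.le hB 3
    have := add_le_add (mul_le_mul_of_nonneg_left h1 (by positivity : (0:ℝ) ≤ cψ ^ 2 / 3))
      (mul_le_mul_of_nonneg_left h2 (by positivity : (0:ℝ) ≤ cψ ^ 2 / 3))
    calc (cψ ^ 2 / 3) * ((1 + (b * T - (k:ℝ))) ^ 3)⁻¹
          + (cψ ^ 2 / 3) * ((1 + ((k:ℝ) + b * T)) ^ 3)⁻¹
        ≤ (cψ ^ 2 / 3) * (M ^ 3)⁻¹ + (cψ ^ 2 / 3) * (M ^ 3)⁻¹ := this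
      _ = (2 * cψ ^ 2 / 3) / M ^ 3 := by ring
  by_cases hint : IntegrableOn
      (fun x => ((2 : ℝ) ^ ((j : ℝ) / 2) * ψ (b * x - (k : ℝ))) ^ 2) (Ioi T ∪ Iio (-T))
  · calc (∫ x in Ioi T ∪ Iio (-T), ((2 : ℝ) ^ ((j : ℝ) / 2) * ψ (b * x - (k : ℝ))) ^ 2)
        ≤ ∫ x in Ioi T ∪ Iio (-T), g x :=
          setIntegral_mono_on hint hgint hSm (fun x _ => hfg x)
      _ ≤ (2 * cψ ^ 2 / 3) / M ^ 3 := hbound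
  · rw [integral_undef hint]
    positivity
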